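/- arXiv:2410.21232 — 3 statements merged into one kernel-verified Lean document; each statement's English description precedes it below -/
import Mathlib

section
/- Let g : ℝ → ℝ be continuously differentiable with g(θ) > 0 for all θ, and let ψ : ℝ × ℝ → ℝ be twice continuously differentiable with ψ(0,θ) = θ and ∂ψ/∂c(c,θ) = 1/g(ψ(c,θ)) for all (c,θ). Define φ : ℝ³ → ℝ³ by φ(u,s,θ) = (u, s, ψ(us/2, θ)). Then φ pulls back the 1-form (1/2)(u ds − s du) + g(θ) dθ to the 1-form u ds + g(θ) dθ; explicitly, for every p = (u,s,θ) and every v = (v_u, v_s, v_θ) ∈ ℝ³, writing (u', s', θ') = φ(p) and (w_u, w_s, w_θ) = Dφ(p)v, one has (1/2)(u' w_s − s' w_u) + g(θ') w_θ = u v_s + g(θ) v_θ. -/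
/-- The normal-form map `φ(u,s,θ) = (u, s, ψ(us/2, θ))`, where `ψ` is the
flow of the vector field `(1/g(θ)) ∂_θ`, pulls back the 1-form
`(1/2)(u ds − s du) + g(θ) dθ` to `u ds + g(θ) dθ`. -/
theorem pullback_normal_form
    (g : ℝ → ℝ) (hg : ContDiff ℝ 1 g) (hgpos : ∀ θ : ℝ, 0 < g θ)
    (ψ : ℝ × ℝ → ℝ) (hψ : ContDiff ℝ 2 ψ)
    (hψ0 : ∀ θ : ℝ, ψ (0, θ) = θ)
    (hψc : ∀ c θ : ℝ, fderiv ℝ ψ (c, θ) (1, 0) = 1 / g (ψ (c, θ)))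
    (φ : ℝ × ℝ × ℝ → ℝ × ℝ × ℝ)
    (hφ : ∀ u s θ : ℝ, φ (u, s, θ) = (u, s, ψ (u * s / 2, θ))) :
    ∀ p v : ℝ × ℝ × ℝ,
      (1 / 2) * ((φ p).1 * (fderiv ℝ φ p v).2.1 - (φ p).2.1 * (fderiv ℝ φ p v).1)
          + g (φ p).2.2 * (fderiv ℝ φ p v).2.2
        = p.1 * v.2.1 + g p.2.2 * v.2.2 := by
  have hgc : Continuous g := hg.continuous
  have hψd : Differentiable ℝ ψ := hψ.differentiable (by norm_num)
  set G : ℝ → ℝ := fun x => ∫ t in (0:ℝ)..x, g t with hGdef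
  have hG : ∀ x, HasDerivAt G (g x) x := fun x =>
    (hgc.integral_hasStrictDerivAt 0 x).hasDerivAt
  -- partial derivative in c
  have hc : ∀ c θ : ℝ, HasDerivAt (fun c' => ψ (c', θ)) (1 / g (ψ (c, θ))) c := by
    intro c θ
    have h1 : HasDerivAt (fun c' : ℝ => (c', θ)) ((1 : ℝ), (0 : ℝ)) c :=
      HasDerivAt.prodMk (hasDerivAt_id c) (hasDerivAt_const c θ)
    have := (hψd (c, θ)).hasFDerivAt.comp_hasDerivAt c h1
    rwa [hψc c θ] at this
  -- G (ψ (c, θ)) = G θ + c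
  have key : ∀ c θ : ℝ, G (ψ (c, θ)) = G θ + c := by
    intro c θ
    have hF : ∀ c' : ℝ, HasDerivAt (fun c'' => G (ψ (c'', θ)) - c'') 0 c' := by
      intro c'
      have h1 : HasDerivAt (fun c'' => G (ψ (c'', θ)))
          (g (ψ (c', θ)) * (1 / g (ψ (c', θ)))) c' :=
        ((hG (ψ (c', θ))).comp c' (hc c' θ) :)
      have h2 := h1.sub (hasDerivAt_id c')
      have : g (ψ (c', θ)) * (1 / g (ψ (c', θ))) - 1 = 0 := by
        have := (hgpos (ψ (c', θ))).ne'
        field_simp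
        norm_num
      rwa [this] at h2
    have hconst := is_const_of_deriv_eq_zero (f := fun c'' => G (ψ (c'', θ)) - c'')
      (fun x => (hF x).differentiableAt) (fun x => (hF x).deriv) c 0
    simp only [hψ0, sub_zero] at hconst
    linarith [hconst]
  -- partial derivative in θ
  have hθ : ∀ c θ : ℝ, g (ψ (c, θ)) * fderiv ℝ ψ (c, θ) (0, 1) = g θ := by
    intro c θ
    have h1 : HasDerivAt (fun θ' : ℝ => (c, θ')) ((0 : ℝ), (1 : ℝ)) θ :=
      HasDerivAt.prodMk (hasDerivAt_const θ c) (hasDerivAt_id θ)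
    have h2 : HasDerivAt (fun θ' => ψ (c, θ')) (fderiv ℝ ψ (c, θ) (0, 1)) θ :=
      (hψd (c, θ)).hasFDerivAt.comp_hasDerivAt θ h1
    have hA : HasDerivAt (fun θ' => G (ψ (c, θ')))
        (g (ψ (c, θ)) * fderiv ℝ ψ (c, θ) (0, 1)) θ :=
      ((hG (ψ (c, θ))).comp θ h2 :)
    have hB : HasDerivAt (fun θ' => G (ψ (c, θ'))) (g θ) θ := by
      have : (fun θ' => G (ψ (c, θ'))) = fun θ' => G θ' + c := by
        funext θ'; exact key c θ'
      rw [this]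
      simpa using (hG θ).add_const c
    exact hA.unique hB
  -- rewrite φ
  have hφ' : φ = fun q : ℝ × ℝ × ℝ => (q.1, q.2.1, ψ (q.1 * q.2.1 * (2:ℝ)⁻¹, q.2.2)) := by
    funext q; rw [hφ q.1 q.2.1 q.2.2, div_eq_mul_inv]
  subst hφ'
  rintro ⟨u, s, θ⟩ ⟨vu, vs, vθ⟩
  -- derivative of φ
  have hfst : HasFDerivAt (fun q : ℝ × ℝ × ℝ => q.1)
      (ContinuousLinearMap.fst ℝ ℝ (ℝ × ℝ)) (u, s, θ) := hasFDerivAt_fst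
  have hsnd1 : HasFDerivAt (fun q : ℝ × ℝ × ℝ => q.2.1)
      ((ContinuousLinearMap.fst ℝ ℝ ℝ).comp (ContinuousLinearMap.snd ℝ ℝ (ℝ × ℝ)))
      (u, s, θ) := hasFDerivAt_fst.comp _ hasFDerivAt_snd
  have hsnd2 : HasFDerivAt (fun q : ℝ × ℝ × ℝ => q.2.2)
      ((ContinuousLinearMap.snd ℝ ℝ ℝ).comp (ContinuousLinearMap.snd ℝ ℝ (ℝ × ℝ)))
      (u, s, θ) := hasFDerivAt_snd.comp _ hasFDerivAt_snd
  have hmul := (hfst.mul hsnd1).mul_const ((2:ℝ)⁻¹)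
  have hinner := HasFDerivAt.prodMk hmul hsnd2
  have hψat := (hψd (u * s * (2:ℝ)⁻¹, θ)).hasFDerivAt
  have hcomp := hψat.comp (x := ((u, s, θ) : ℝ × ℝ × ℝ)) hinner
  have hD := HasFDerivAt.prodMk hfst (HasFDerivAt.prodMk hsnd1 hcomp)
  have hD' : HasFDerivAt
      (fun q : ℝ × ℝ × ℝ => (q.1, q.2.1, ψ (q.1 * q.2.1 * (2:ℝ)⁻¹, q.2.2))) _ (u, s, θ) := hD
  rw [hD'.fderiv]
  simp only [ContinuousLinearMap.prod_apply, ContinuousLinearMap.comp_apply,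
    ContinuousLinearMap.coe_fst', ContinuousLinearMap.coe_snd',
    ContinuousLinearMap.add_apply, ContinuousLinearMap.smul_apply,
    ContinuousLinearMap.coe_comp', Function.comp_apply,
    smul_eq_mul]
  -- linearity of fderiv ψ
  have hlin : ∀ (a b : ℝ),
      fderiv ℝ ψ (u * s * (2:ℝ)⁻¹, θ) (a, b)
        = a * fderiv ℝ ψ (u * s * (2:ℝ)⁻¹, θ) (1, 0) + b * fderiv ℝ ψ (u * s * (2:ℝ)⁻¹, θ) (0, 1) := by
    intro a b
    have : ((a, b) : ℝ × ℝ) = a • ((1 : ℝ), (0 : ℝ)) + b • ((0 : ℝ), (1 : ℝ)) := by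
      simp [Prod.ext_iff]
    rw [this, map_add, map_smul, map_smul, smul_eq_mul, smul_eq_mul]
  rw [hlin, hψc]
  have hgψ := (hgpos (ψ (u * s * (2:ℝ)⁻¹, θ))).ne'
  have hD01 : fderiv ℝ ψ (u * s * (2:ℝ)⁻¹, θ) (0, 1) = g θ / g (ψ (u * s * (2:ℝ)⁻¹, θ)) :=
    (eq_div_iff hgψ).mpr (by rw [mul_comm]; exact hθ _ θ)
  rw [hD01]
  set c0 := u * s * (2:ℝ)⁻¹ with hc0
  have hc0' : c0 = u * s / 2 := by rw [hc0]; ring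
  rw [hc0']
  rw [hc0'] at hgψ
  field_simp
  ring
end

section
/- Let δ > 0 and let h : ℝ → ℝ be continuously differentiable with h(r) > 0 and h'(r) < 0 for all r ∈ (0, δ]. On U = {(r,φ,θ) ∈ ℝ³ : 0 < r ≤ δ} define the 1-form α by α_(r,φ,θ)(v) = h(r)((1/2) r² v_φ + v_θ). Then the vector field R(r,φ,θ) = (0, −h'(r)/(r h(r)²), (r h(r) + (1/2) r² h'(r))/(r h(r)²)) satisfies α_p(R(p)) = 1 and (dα)_p(R(p), v) = 0 for every p ∈ U and every v ∈ ℝ³; moreover, for each p ∈ U, R(p) is the unique vector satisfying these two conditions, and the φ-component of R(p) is strictly positive. -/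
/-- The exterior derivative of a 1-form `α` on `ℝ³`, represented as a map
`ℝ³ → (ℝ³ →L[ℝ] ℝ)`: `(dα)_p(v,w) = (Dα(p)v)(w) − (Dα(p)w)(v)`. -/
noncomputable def extDerivOneForm (α : ℝ × ℝ × ℝ → (ℝ × ℝ × ℝ →L[ℝ] ℝ))
    (p v w : ℝ × ℝ × ℝ) : ℝ :=
  fderiv ℝ α p v w - fderiv ℝ α p w v

noncomputable def fst1 : ℝ × ℝ × ℝ →L[ℝ] ℝ := ContinuousLinearMap.fst ℝ ℝ (ℝ × ℝ)
noncomputable def Lphi : ℝ × ℝ × ℝ →L[ℝ] ℝ :=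
  (ContinuousLinearMap.fst ℝ ℝ ℝ).comp (ContinuousLinearMap.snd ℝ ℝ (ℝ × ℝ))
noncomputable def Ltheta : ℝ × ℝ × ℝ →L[ℝ] ℝ :=
  (ContinuousLinearMap.snd ℝ ℝ ℝ).comp (ContinuousLinearMap.snd ℝ ℝ (ℝ × ℝ))

lemma key (h : ℝ → ℝ) (hh : ContDiff ℝ 1 h)
    (α : ℝ × ℝ × ℝ → (ℝ × ℝ × ℝ →L[ℝ] ℝ))
    (hα : ∀ p v : ℝ × ℝ × ℝ, α p v = h p.1 * ((1 / 2) * p.1 ^ 2 * v.2.1 + v.2.2))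
    (p v w : ℝ × ℝ × ℝ) :
    extDerivOneForm α p v w =
      (deriv h p.1 * ((1/2) * p.1 ^ 2) + h p.1 * p.1) * (v.1 * w.2.1 - w.1 * v.2.1)
        + deriv h p.1 * (v.1 * w.2.2 - w.1 * v.2.2) := by
  have hd : ∀ r : ℝ, HasDerivAt h (deriv h r) r := fun r =>
    ((hh.differentiable one_ne_zero) r).hasDerivAt
  set r := p.1
  set A : ℝ := deriv h r * ((1/2) * r ^ 2) + h r * r with hA
  set D : (ℝ × ℝ × ℝ) →L[ℝ] ((ℝ × ℝ × ℝ) →L[ℝ] ℝ) :=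
    fst1.smulRight (A • Lphi + deriv h r • Ltheta) with hD
  have hF : HasFDerivAt α D p := by
    have hfst : HasFDerivAt (fun q : ℝ × ℝ × ℝ => q.1) fst1 p := hasFDerivAt_fst
    have hc1 : HasDerivAt (fun s : ℝ => h s * ((1/2) * s ^ 2)) A r := by
      have h2 : HasDerivAt (fun s : ℝ => (1/2) * s ^ 2) r r := by
        have := (hasDerivAt_pow 2 r).const_mul (1/2 : ℝ)
        simpa using this.congr_deriv (by ring)
      simpa [hA] using (hd r).fun_mul h2
    have hc1' : HasFDerivAt (fun q : ℝ × ℝ × ℝ => h q.1 * ((1/2) * q.1 ^ 2))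
        (A • fst1) p := by
      simpa [ContinuousLinearMap.one_def, Function.comp_def] using
        (hc1.comp_hasFDerivAt p hfst)
    have hc2' : HasFDerivAt (fun q : ℝ × ℝ × ℝ => h q.1) ((deriv h r) • fst1) p :=
      (hd r).comp_hasFDerivAt p hfst
    have hF1 : HasFDerivAt (fun q : ℝ × ℝ × ℝ =>
        (h q.1 * ((1/2) * q.1 ^ 2)) • Lphi + (h q.1) • Ltheta) D p := by
      have := (hc1'.fun_smul (hasFDerivAt_const Lphi p)).fun_add
        (hc2'.fun_smul (hasFDerivAt_const Ltheta p))
      refine this.congr_fderiv ?_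
      refine ContinuousLinearMap.ext fun u => ContinuousLinearMap.ext fun z => ?_
      simp [hD, fst1, Lphi, Ltheta, ContinuousLinearMap.smulRight_apply]
      ring
    have : α = fun q : ℝ × ℝ × ℝ =>
        (h q.1 * ((1/2) * q.1 ^ 2)) • Lphi + (h q.1) • Ltheta := by
      funext q
      refine ContinuousLinearMap.ext fun u => ?_
      simp [hα, Lphi, Ltheta]
      ring
    rw [this]; exact hF1
  rw [extDerivOneForm, hF.fderiv]
  simp [hD, fst1, Lphi, Ltheta, ContinuousLinearMap.smulRight_apply]
  ring

/-- For the model contact form `α = h(r)((1/2) r² dφ + dθ)` on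
`U = {0 < r ≤ δ}` with `h > 0`, `h' < 0`, the displayed vector field `R` is its Reeb
vector field (`α(R)=1`, `dα(R,·)=0`), it is the unique such vector at each point, and
its `φ`-component is strictly positive. -/
theorem reeb_vector_field_of_model_form
    (δ : ℝ) (hδ : 0 < δ)
    (h : ℝ → ℝ) (hh : ContDiff ℝ 1 h)
    (hpos : ∀ r ∈ Set.Ioc (0 : ℝ) δ, 0 < h r)
    (hneg : ∀ r ∈ Set.Ioc (0 : ℝ) δ, deriv h r < 0)
    (α : ℝ × ℝ × ℝ → (ℝ × ℝ × ℝ →L[ℝ] ℝ))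
    (hα : ∀ p v : ℝ × ℝ × ℝ, α p v = h p.1 * ((1 / 2) * p.1 ^ 2 * v.2.1 + v.2.2))
    (R : ℝ × ℝ × ℝ → ℝ × ℝ × ℝ)
    (hR : ∀ p : ℝ × ℝ × ℝ,
      R p = (0, -(deriv h p.1) / (p.1 * (h p.1) ^ 2),
        (p.1 * h p.1 + (1 / 2) * p.1 ^ 2 * deriv h p.1) / (p.1 * (h p.1) ^ 2))) :
    ∀ p : ℝ × ℝ × ℝ, p.1 ∈ Set.Ioc (0 : ℝ) δ →
      α p (R p) = 1 ∧
      (∀ v : ℝ × ℝ × ℝ, extDerivOneForm α p (R p) v = 0) ∧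
      (∀ v' : ℝ × ℝ × ℝ,
        (α p v' = 1 ∧ ∀ v : ℝ × ℝ × ℝ, extDerivOneForm α p v' v = 0) → v' = R p) ∧
      0 < (R p).2.1 := by
  intro p hp
  obtain ⟨hr0, hrδ⟩ := hp
  have hhp : 0 < h p.1 := hpos p.1 ⟨hr0, hrδ⟩
  have hhn : deriv h p.1 < 0 := hneg p.1 ⟨hr0, hrδ⟩
  have hrne : p.1 ≠ 0 := ne_of_gt hr0
  have hhne : h p.1 ≠ 0 := ne_of_gt hhp
  refine ⟨?_, ?_, ?_, ?_⟩
  · rw [hα, hR]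
    field_simp
    ring
  · intro v
    rw [key h hh α hα, hR]
    field_simp
    ring
  · rintro v' ⟨hv1, hv2⟩
    rw [hα] at hv1
    have e2 := hv2 (0, 1, 0)
    rw [key h hh α hα] at e2
    have e3 := hv2 (0, 0, 1)
    rw [key h hh α hα] at e3
    have e1 := hv2 (1, 0, 0)
    rw [key h hh α hα] at e1
    simp only at e1 e2 e3
    have h1 : v'.1 = 0 := by
      have : deriv h p.1 * v'.1 = 0 := by linarith [e3]
      exact (mul_eq_zero.mp this).resolve_left (ne_of_lt hhn) 
    rw [h1] at e1
    have eA : (deriv h p.1 * ((1/2) * p.1 ^ 2) + h p.1 * p.1) * v'.2.1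
        + deriv h p.1 * v'.2.2 = 0 := by linarith [e1]
    have t : p.1 * (h p.1) ^ 2 * v'.2.1 = -(deriv h p.1) := by
      linear_combination (h p.1) * eA - (deriv h p.1) * hv1
    have h21 : v'.2.1 = -(deriv h p.1) / (p.1 * (h p.1) ^ 2) := by
      rw [eq_div_iff (by positivity)]
      linarith [t]
    have h22 : v'.2.2 = (p.1 * h p.1 + (1/2) * p.1 ^ 2 * deriv h p.1)
        / (p.1 * (h p.1) ^ 2) := by
      rw [eq_div_iff (by positivity)]
      linear_combination p.1 * (h p.1) * hv1 - ((1/2) * p.1 ^ 2) * t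
    rw [hR]
    exact Prod.ext h1 (Prod.ext h21 h22)
  · rw [hR]
    have : (0:ℝ) < -(deriv h p.1) / (p.1 * (h p.1) ^ 2) := by
      apply div_pos (by linarith) (by positivity)
    simpa using this
end

section
/- Let δ > 0 and let h : ℝ → ℝ be continuously differentiable with h(r) > 0 and h'(r) < 0 for all r ∈ (0, δ]. On U = {(r,φ,θ) ∈ ℝ³ : 0 < r ≤ δ} let R(r,φ,θ) = (0, −h'(r)/(r h(r)²), (r h(r) + (1/2) r² h'(r))/(r h(r)²)), the Reeb vector field of the contact form h(r)((1/2) r² dφ + dθ). Then for every differentiable curve c : I → U defined on a real interval I with c'(s) = R(c(s)) for all s ∈ I, the φ-coordinate of c is strictly increasing on I; consequently c is injective, and in particular R admits no nonconstant periodic integral curve. -/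
/-- For the Reeb vector field `R` of the model contact form
`h(r)((1/2) r² dφ + dθ)` on `U = {0 < r ≤ δ}` (with `h > 0`, `h' < 0`), the
`φ`-coordinate of any integral curve is strictly increasing; hence every integral
curve is injective and, in particular, `R` has no nonconstant periodic integral
curve. -/
theorem reeb_flow_has_no_periodic_orbit
    (δ : ℝ) (hδ : 0 < δ)
    (h : ℝ → ℝ) (hh : ContDiff ℝ 1 h)
    (hpos : ∀ r ∈ Set.Ioc (0 : ℝ) δ, 0 < h r)
    (hneg : ∀ r ∈ Set.Ioc (0 : ℝ) δ, deriv h r < 0)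
    (R : ℝ × ℝ × ℝ → ℝ × ℝ × ℝ)
    (hR : ∀ p : ℝ × ℝ × ℝ,
      R p = (0, -(deriv h p.1) / (p.1 * (h p.1) ^ 2),
        (p.1 * h p.1 + (1 / 2) * p.1 ^ 2 * deriv h p.1) / (p.1 * (h p.1) ^ 2)))
    (I : Set ℝ) (hI : I.OrdConnected)
    (c : ℝ → ℝ × ℝ × ℝ)
    (hcU : ∀ s ∈ I, (c s).1 ∈ Set.Ioc (0 : ℝ) δ)
    (hc : ∀ s ∈ I, HasDerivWithinAt c (R (c s)) I s) :
    StrictMonoOn (fun s => (c s).2.1) I ∧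
    Set.InjOn c I ∧
    ∀ T : ℝ, 0 < T → ∀ s : ℝ, s ∈ I → s + T ∈ I → c (s + T) ≠ c s := by
  set L : ℝ × ℝ × ℝ →L[ℝ] ℝ :=
    (ContinuousLinearMap.fst ℝ ℝ ℝ).comp (ContinuousLinearMap.snd ℝ ℝ (ℝ × ℝ))
  have hL : ∀ p : ℝ × ℝ × ℝ, L p = p.2.1 := fun p => rfl
  have hderiv : ∀ s ∈ I, HasDerivWithinAt (fun s => (c s).2.1) ((R (c s)).2.1) I s := by
    intro s hs
    have := L.hasFDerivAt.comp_hasDerivWithinAt s (hc s hs)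
    simpa [hL, Function.comp_def] using this
  have hposval : ∀ s ∈ I, 0 < (R (c s)).2.1 := by
    intro s hs
    have hr := hcU s hs
    rw [hR]
    dsimp only
    apply div_pos
    · linarith [hneg _ hr]
    · exact mul_pos hr.1 (pow_pos (hpos _ hr) 2)
  have hmono : StrictMonoOn (fun s => (c s).2.1) I := by
    apply strictMonoOn_of_hasDerivWithinAt_pos (f' := fun s => (R (c s)).2.1) hI.convex
    · exact fun s hs => (hderiv s hs).continuousWithinAt
    · exact fun s hs => (hderiv s (interior_subset hs)).mono interior_subset
    · exact fun s hs => hposval s (interior_subset hs)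
  refine ⟨hmono, ?_, ?_⟩
  · intro s hs t ht heq
    exact hmono.injOn hs ht (congrArg (fun p => p.2.1) heq)
  · intro T hT s hs hsT heq
    have := hmono hs hsT (by linarith)
    simp only [heq] at this
    exact lt_irrefl _ this
end
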